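/- Let E = EuclideanSpace ℝ (Fin n), let f : E → ℝ be differentiable with gradient ∇f that is Lipschitz with constant L > 0. Let d ∈ ℝⁿ with 1 ≤ dⱼ ≤ κ_max for all j, let ρ > 0 satisfy ρ·κ_max ≤ 1/L, and define the diagonal operator P by (P u)ⱼ = ρ·dⱼ·uⱼ. Then for every v ∈ E, f(v − P(∇f(v))) ≤ f(v) − (ρ/2)·‖∇f(v)‖². -/

import Mathlib

open intervalIntegral in
/-- Descent lemma: for `f` differentiable with `L`-Lipschitz gradient,
`f (v + h) ≤ f v + ⟪∇f v, h⟫ + L/2 ‖h‖²`. -/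
lemma descent_aux {E : Type*} [NormedAddCommGroup E] [InnerProductSpace ℝ E] [CompleteSpace E]
    (f : E → ℝ) (hf : Differentiable ℝ f) (L : ℝ) (hL : 0 < L)
    (hlip : LipschitzWith (Real.toNNReal L) (fun v => gradient f v))
    (v h : E) :
    f (v + h) ≤ f v + inner ℝ (gradient f v) h + L / 2 * ‖h‖ ^ 2 := by
  set g' : ℝ → ℝ := fun t => inner ℝ (gradient f (v + t • h)) h with hg'
  have hderiv : ∀ t ∈ Set.uIcc (0:ℝ) 1, HasDerivAt (fun t : ℝ => f (v + t • h)) (g' t) t := by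
    intro t _
    have h1 : HasDerivAt (fun t : ℝ => v + t • h) h t := by
      simpa using ((hasDerivAt_id t).smul_const h).const_add v
    have h2 := (hf (v + t • h)).hasGradientAt.hasFDerivAt.comp_hasDerivAt t h1
    simpa [hg', Function.comp_def, gradient] using h2
  have hcont : Continuous g' := by
    have : Continuous (fun t : ℝ => gradient f (v + t • h)) :=
      hlip.continuous.comp (by continuity)
    exact this.inner continuous_const
  have hint : IntervalIntegrable g' MeasureTheory.volume 0 1 := hcont.intervalIntegrable 0 1
  have heq : f (v + h) - f v = ∫ t in (0:ℝ)..1, g' t := by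
    have := intervalIntegral.integral_eq_sub_of_hasDerivAt hderiv hint
    simpa using this.symm
  have hbound : ∀ t ∈ Set.Icc (0:ℝ) 1, g' t ≤ inner ℝ (gradient f v) h + L * t * ‖h‖ ^ 2 := by
    intro t ht
    have hsplit : g' t = inner ℝ (gradient f v) h + inner ℝ (gradient f (v + t • h) - gradient f v) h := by
      rw [inner_sub_left]; ring
    rw [hsplit]
    gcongr _ + ?_
    calc inner ℝ (gradient f (v + t • h) - gradient f v) h
        ≤ ‖gradient f (v + t • h) - gradient f v‖ * ‖h‖ := real_inner_le_norm _ _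
      _ ≤ (L * (t * ‖h‖)) * ‖h‖ := by
          have := hlip.dist_le_mul (v + t • h) v
          rw [Real.coe_toNNReal L hL.le] at this
          have h2 : dist (v + t • h) v = t * ‖h‖ := by
            rw [dist_eq_norm]
            simp [norm_smul, abs_of_nonneg ht.1]
          rw [h2] at this
          have hd : dist (gradient f (v + t • h)) (gradient f v)
              = ‖gradient f (v + t • h) - gradient f v‖ := dist_eq_norm _ _
          rw [hd] at this
          exact mul_le_mul_of_nonneg_right this (norm_nonneg h)
      _ = L * t * ‖h‖ ^ 2 := by ring
  have hint2 : IntervalIntegrable (fun t => inner ℝ (gradient f v) h + L * t * ‖h‖ ^ 2)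
      MeasureTheory.volume 0 1 := by
    apply Continuous.intervalIntegrable; continuity
  have hmono := intervalIntegral.integral_mono_on (by norm_num : (0:ℝ) ≤ 1) hint hint2 hbound
  have hcalc : (∫ t in (0:ℝ)..1, (inner ℝ (gradient f v) h + L * t * ‖h‖ ^ 2 : ℝ))
      = inner ℝ (gradient f v) h + L / 2 * ‖h‖ ^ 2 := by
    rw [intervalIntegral.integral_add (by apply Continuous.intervalIntegrable; continuity)
      (by apply Continuous.intervalIntegrable; continuity)]
    simp only [intervalIntegral.integral_const, smul_eq_mul]
    have : (∫ t in (0:ℝ)..1, L * t * ‖h‖ ^ 2) = L / 2 * ‖h‖ ^ 2 := by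
      have : (fun t : ℝ => L * t * ‖h‖ ^ 2) = fun t : ℝ => (L * ‖h‖ ^ 2) * t := by
        ext t; ring
      rw [this, intervalIntegral.integral_const_mul, integral_id]
      ring
    rw [this]; ring
  linarith [hmono, heq.le, hcalc.le, heq.ge, hcalc.ge]

/-- Descent lemma for the diagonal preconditioner `P = ρ · diag(d₁,…,dₙ)` with
`1 ≤ dⱼ ≤ κmax` and `ρ · κmax ≤ 1/L`. -/
theorem stmt1 {n : ℕ} (hn : 1 ≤ n)
    (f : EuclideanSpace ℝ (Fin n) → ℝ) (hf : Differentiable ℝ f)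
    (L : ℝ) (hL : 0 < L)
    (hlip : LipschitzWith (Real.toNNReal L) (fun v => gradient f v))
    (d : Fin n → ℝ) (κmax : ℝ)
    (hd : ∀ j, 1 ≤ d j ∧ d j ≤ κmax)
    (ρ : ℝ) (hρ : 0 < ρ) (hρκ : ρ * κmax ≤ 1 / L)
    (P : EuclideanSpace ℝ (Fin n) → EuclideanSpace ℝ (Fin n))
    (hP : ∀ u j, P u j = ρ * d j * u j) :
    ∀ v, f (v - P (gradient f v)) ≤ f v - (ρ / 2) * ‖gradient f v‖ ^ 2 := by
  intro v
  set g := gradient f v with hg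
  have key := descent_aux f hf L hL hlip v (-(P g))
  rw [← sub_eq_add_neg, inner_neg_right, norm_neg] at key
  have hA : (inner ℝ g (P g) : ℝ) = ∑ j, ρ * d j * (g j) ^ 2 := by
    rw [PiLp.inner_apply]
    refine Finset.sum_congr rfl fun j _ => ?_
    simp [RCLike.inner_apply, hP]; ring
  have hB : ‖P g‖ ^ 2 = ∑ j, (ρ * d j * g j) ^ 2 := by
    rw [← real_inner_self_eq_norm_sq, PiLp.inner_apply]
    refine Finset.sum_congr rfl fun j _ => ?_
    simp [RCLike.inner_apply, hP]; rw [← abs_mul, ← abs_mul, sq_abs]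
  have hC : ‖g‖ ^ 2 = ∑ j, (g j) ^ 2 := by
    rw [← real_inner_self_eq_norm_sq, PiLp.inner_apply]
    refine Finset.sum_congr rfl fun j _ => ?_
    simp [RCLike.inner_apply]
  have hsum : L / 2 * (∑ j, (ρ * d j * g j) ^ 2) + (ρ / 2) * ∑ j, (g j) ^ 2
      ≤ ∑ j, ρ * d j * (g j) ^ 2 := by
    rw [Finset.mul_sum, Finset.mul_sum, ← Finset.sum_add_distrib]
    refine Finset.sum_le_sum fun j _ => ?_
    obtain ⟨hd1, hd2⟩ := hd j
    have hLρd : L * (ρ * d j) ≤ 1 := by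
      have h1 : ρ * d j ≤ ρ * κmax := by nlinarith
      have h2 : L * (ρ * κmax) ≤ 1 := by
        rw [div_eq_inv_mul] at hρκ
        calc L * (ρ * κmax) ≤ L * (L⁻¹ * 1) := by
              apply mul_le_mul_of_nonneg_left _ hL.le; simpa using hρκ
          _ = 1 := by field_simp
      nlinarith
    have hcoef : L / 2 * (ρ * d j) ^ 2 + ρ / 2 ≤ ρ * d j := by
      nlinarith [mul_le_mul_of_nonneg_left hLρd (by positivity : (0:ℝ) ≤ ρ * d j)]
    nlinarith [mul_le_mul_of_nonneg_right hcoef (sq_nonneg (g j))]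
  rw [hA, hB] at key
  rw [hC]
  linarith
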